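/- Let E be a Hilbert space and M_θ ∈ Rₙ^∞ ⊗̄ B(E) a nonzero multi-analytic operator with Fourier coefficients (θ_α)_{α ∈ 𝔽ₙ⁺}, and suppose θ(0) := θ_{g_0} ≠ 0. Then for every h ∈ E, inf { ⟨M_θ* M_θ (h − p), h − p⟩ : p a polynomial in F²(Hₙ) ⊗ E with p(0) = 0 } ≥ ⟨θ(0)* θ(0) h, h⟩, where h is identified with 1 ⊗ h. -/

import Mathlib

open scoped InnerProductSpace

/-- In the Fock model `F ≅ F²(Hₙ) ⊗ E`, let `M` be a nonzero multi-analytic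
operator whose zeroth Fourier coefficient `θ(0) = J* M J` is nonzero.  Then for every
`h ∈ E` and every polynomial `p` with `p(0) = 0`,
`⟨M*M (h − p), h − p⟩ ≥ ⟨θ(0)*θ(0) h, h⟩`; i.e. the Szegő-type infimum is bounded below
by `⟨θ(0)*θ(0)h, h⟩`. -/
theorem stmt_10 {F E : Type*}
    [NormedAddCommGroup F] [InnerProductSpace ℂ F] [CompleteSpace F]
    [NormedAddCommGroup E] [InnerProductSpace ℂ E] [CompleteSpace E]
    {n : ℕ} (S : Fin n → F →L[ℂ] F)
    (hSiso : ∀ i (x : F), ‖S i x‖ = ‖x‖)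
    (hSorth : ∀ i j, i ≠ j → ContinuousLinearMap.adjoint (S i) ∘L S j = 0)
    (Sw : List (Fin n) → F →L[ℂ] F) (hSw_nil : Sw [] = 1)
    (hSw_cons : ∀ i w, Sw (i :: w) = S i ∘L Sw w)
    (J : E →L[ℂ] F) (hJiso : ∀ h, ‖J h‖ = ‖h‖)
    (hJwand : LinearMap.range (J : E →ₗ[ℂ] F)
        = ⨅ i, LinearMap.ker (ContinuousLinearMap.adjoint (S i) : F →ₗ[ℂ] F))
    (hJspan : (Submodule.span ℂ
        (⋃ w : List (Fin n), Set.range fun h : E => Sw w (J h))).topologicalClosure = ⊤)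
    (M : F →L[ℂ] F) (hM : ∀ i, M ∘L S i = S i ∘L M) (hM0 : M ≠ 0)
    (hθ0 : (ContinuousLinearMap.adjoint J ∘L M ∘L J : E →L[ℂ] E) ≠ 0) :
    ∀ h : E, ∀ p ∈ Submodule.span ℂ
        (⋃ w : List (Fin n), ⋃ (_ : w ≠ []), Set.range fun h : E => Sw w (J h)),
      ‖(ContinuousLinearMap.adjoint J ∘L M ∘L J) h‖ ^ 2 ≤ ‖M (J h - p)‖ ^ 2 := by
  intro h p hp
  -- J* ∘ S i = 0
  have hJS : ∀ i, ContinuousLinearMap.adjoint J ∘L S i = 0 := by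
    intro i
    have h1 : ContinuousLinearMap.adjoint (S i) ∘L J = 0 := by
      ext k
      have : J k ∈ LinearMap.ker (ContinuousLinearMap.adjoint (S i) : F →ₗ[ℂ] F) := by
        have : J k ∈ LinearMap.range (J : E →ₗ[ℂ] F) := LinearMap.mem_range_self _ k
        rw [hJwand] at this
        exact (Submodule.mem_iInf _).mp this i
      simpa using this
    have := congrArg ContinuousLinearMap.adjoint h1
    rwa [ContinuousLinearMap.adjoint_comp, ContinuousLinearMap.adjoint_adjoint,
      map_zero] at this
  -- J* (M p) = 0
  have hMp : ContinuousLinearMap.adjoint J (M p) = 0 := by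
    induction hp using Submodule.span_induction with
    | mem x hx =>
      simp only [Set.mem_iUnion] at hx
      obtain ⟨w, hw, k, rfl⟩ := hx
      cases w with
      | nil => exact absurd rfl hw
      | cons i w' =>
        rw [hSw_cons]
        have hMS : M (S i (Sw w' (J k))) = S i (M (Sw w' (J k))) :=
          congrFun (congrArg DFunLike.coe (hM i)) (Sw w' (J k))
        simp only [ContinuousLinearMap.comp_apply, hMS]
        have := congrFun (congrArg DFunLike.coe (hJS i)) (M (Sw w' (J k)))
        simpa using this
    | zero => simp
    | add x y hx hy ihx ihy => simp [map_add, ihx, ihy]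
    | smul c x hx ihx => simp [map_smul, ihx]
  -- key equality
  have key : (ContinuousLinearMap.adjoint J ∘L M ∘L J) h
      = ContinuousLinearMap.adjoint J (M (J h - p)) := by
    simp [map_sub, hMp]
  -- norm bound
  have hJnorm : ‖ContinuousLinearMap.adjoint J‖ ≤ 1 := by
    rw [ContinuousLinearMap.adjoint.norm_map]
    exact ContinuousLinearMap.opNorm_le_bound _ zero_le_one
      (fun x => by rw [hJiso, one_mul])
  have hle : ‖(ContinuousLinearMap.adjoint J ∘L M ∘L J) h‖ ≤ ‖M (J h - p)‖ := by
    rw [key]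
    calc ‖ContinuousLinearMap.adjoint J (M (J h - p))‖
        ≤ ‖ContinuousLinearMap.adjoint J‖ * ‖M (J h - p)‖ :=
          ContinuousLinearMap.le_opNorm _ _
      _ ≤ 1 * ‖M (J h - p)‖ := by
          exact mul_le_mul_of_nonneg_right hJnorm (norm_nonneg _)
      _ = ‖M (J h - p)‖ := one_mul _
  exact pow_le_pow_left₀ (norm_nonneg _) hle 2
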